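/- Let β be a real number with 1 < β < 3, let n be a positive integer, let d be an integer with 1 ≤ d ≤ n, and let u be a positive integer. Set U = min{u, √(n/d)} and C_{β,u} = (∑_{i=1}^{u} i^{-β})^{-1}. Then C_{β,u} · (d/n) · ∑_{λ=1}^{⌈U⌉} λ^{2-β} ≥ ((β-1)/(4β)) · d · U^{3-β} / n. -/

import Mathlib

open Finset

lemma sum_rpow_neg_le (β : ℝ) (hβ1 : 1 < β) (u : ℕ) (hu : 0 < u) :
    ∑ i ∈ Finset.Icc 1 u, (i : ℝ) ^ (-β) ≤ β / (β - 1) := by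
  have hb : (0:ℝ) < β - 1 := by linarith
  have hInt := AntitoneOn.sum_le_integral_Ico (f := fun x : ℝ => x ^ (-β)) (a := 1) (b := u) hu
    (by
      intro x hx y hy hxy
      have hx1 : (1:ℝ) ≤ x := by exact_mod_cast hx.1
      exact Real.rpow_le_rpow_of_nonpos (by linarith) hxy (by linarith))
  have hIval : ∫ x in ((1:ℕ):ℝ)..((u:ℕ):ℝ), x ^ (-β) ≤ 1 / (β - 1) := by
    rw [integral_rpow]
    · push_cast
      rw [Real.one_rpow]
      have ha : (u:ℝ) ^ (-β + 1) ≤ 1 :=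
        Real.rpow_le_one_of_one_le_of_nonpos (by exact_mod_cast hu) (by linarith)
      have h0 : (0:ℝ) ≤ (u:ℝ) ^ (-β + 1) := Real.rpow_nonneg (by positivity) _
      have heq : ((u:ℝ) ^ (-β + 1) - 1) / (-β + 1) = (1 - (u:ℝ) ^ (-β + 1)) / (β - 1) := by
        rw [div_eq_div_iff (by linarith) (by linarith)]
        ring
      rw [heq, div_le_div_iff₀ hb hb]
      nlinarith
    · right
      refine ⟨by intro h; linarith, ?_⟩
      push_cast
      intro h
      rw [Set.mem_uIcc] at h
      have : (1:ℝ) ≤ (u:ℝ) := by exact_mod_cast hu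
      rcases h with ⟨h1, _⟩ | ⟨_, h2⟩ <;> linarith
  have hsplit : Finset.Icc 1 u = insert 1 (Finset.Ioc 1 u) := by
    rw [Finset.Ioc_insert_left hu]
  have hmap : ∑ i ∈ Finset.Ioc 1 u, (i : ℝ) ^ (-β)
      = ∑ i ∈ Finset.Ico 1 u, (((i + 1 : ℕ)):ℝ) ^ (-β) := by
    rw [← Finset.Icc_add_one_left_eq_Ioc, ← Finset.Ico_add_one_right_eq_Icc]
    rw [Finset.sum_Ico_eq_sum_range, Finset.sum_Ico_eq_sum_range]
    rw [show u + 1 - (1 + 1) = u - 1 from by omega]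
    apply Finset.sum_congr rfl
    intro i _
    congr 1
    push_cast
    ring
  calc ∑ i ∈ Finset.Icc 1 u, (i : ℝ) ^ (-β)
      = 1 + ∑ i ∈ Finset.Ico 1 u, (((i + 1 : ℕ)):ℝ) ^ (-β) := by
        rw [hsplit, Finset.sum_insert (by simp), hmap]; simp
    _ ≤ 1 + 1 / (β - 1) := (add_le_add_iff_left 1).mpr (hInt.trans hIval)
    _ = β / (β - 1) := by field_simp; ring

lemma tail_sum_ge (β : ℝ) (hβ1 : 1 < β) (hβ3 : β < 3) (U : ℝ) (hU : 1 ≤ U) :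
    U ^ (3 - β) / 4 ≤ ∑ l ∈ Finset.Icc 1 ⌈U⌉₊, (l : ℝ) ^ (2 - β) := by
  set N := ⌈U⌉₊ with hN
  have hU0 : (0:ℝ) < U := by linarith
  have hNU : U ≤ N := Nat.le_ceil U
  have hN2U : (N : ℝ) ≤ 2 * U := by
    have := Nat.ceil_lt_add_one (le_of_lt hU0)
    rw [← hN] at this
    linarith
  have hUp : (0:ℝ) ≤ U ^ (2 - β) := Real.rpow_nonneg (le_of_lt hU0) _
  have hkey : ∀ x : ℝ, U / 2 ≤ x → x ≤ 2 * U → U ^ (2 - β) / 2 ≤ x ^ (2 - β) := by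
    intro x h1 h2
    rcases le_or_gt β 2 with hβ2 | hβ2
    · have e1 : (U / 2) ^ (2 - β) ≤ x ^ (2 - β) :=
        Real.rpow_le_rpow (by linarith) h1 (by linarith)
      have e2 : U ^ (2 - β) / 2 ≤ (U / 2) ^ (2 - β) := by
        rw [Real.div_rpow (le_of_lt hU0) (by norm_num)]
        have h21 : ((2:ℝ)) ^ (2 - β) ≤ 2 ^ (1:ℝ) :=
          Real.rpow_le_rpow_of_exponent_le (by norm_num) (by linarith)
        rw [Real.rpow_one] at h21
        have h2p : (0:ℝ) < (2:ℝ) ^ (2 - β) := Real.rpow_pos_of_pos (by norm_num) _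
        rw [div_le_div_iff₀ (by norm_num) h2p]
        nlinarith
      linarith
    · have e1 : (2 * U) ^ (2 - β) ≤ x ^ (2 - β) :=
        Real.rpow_le_rpow_of_nonpos (by linarith) h2 (by linarith)
      have e2 : U ^ (2 - β) / 2 ≤ (2 * U) ^ (2 - β) := by
        rw [Real.mul_rpow (by norm_num) (le_of_lt hU0)]
        have h21 : (2:ℝ) ^ (-1:ℝ) ≤ 2 ^ (2 - β) :=
          Real.rpow_le_rpow_of_exponent_le (by norm_num) (by linarith)
        rw [Real.rpow_neg_one] at h21
        nlinarith
      linarith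
  set M := N / 2 with hM
  have hN1 : 1 ≤ N := Nat.one_le_ceil_iff.mpr hU0
  have hMN : M ≤ N := Nat.div_le_self N 2
  have hsub : Finset.Icc (M + 1) N ⊆ Finset.Icc 1 N :=
    Finset.Icc_subset_Icc (by omega) le_rfl
  have hMhalf : (N : ℝ) / 2 ≤ (M : ℝ) + 1 := by
    have h2 : N ≤ 2 * M + 2 := by omega
    have : (N:ℝ) ≤ 2 * M + 2 := by exact_mod_cast h2
    linarith
  have hterm : ∀ l ∈ Finset.Icc (M + 1) N, U ^ (2 - β) / 2 ≤ (l : ℝ) ^ (2 - β) := by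
    intro l hl
    rw [Finset.mem_Icc] at hl
    apply hkey
    · have h2 : ((M : ℝ) + 1) ≤ l := by exact_mod_cast hl.1
      linarith
    · have : (l:ℝ) ≤ N := by exact_mod_cast hl.2
      linarith
  have hcard : (U / 2) ≤ ((Finset.Icc (M + 1) N).card : ℝ) := by
    rw [Nat.card_Icc, show N + 1 - (M + 1) = N - M from by omega]
    have h1 : ((N - M : ℕ) : ℝ) = (N : ℝ) - M := by
      rw [Nat.cast_sub hMN]
    rw [h1]
    have h2 : 2 * M ≤ N := by omega
    have h2' : (2:ℝ) * M ≤ N := by exact_mod_cast h2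
    linarith
  calc U ^ (3 - β) / 4 = (U / 2) * (U ^ (2 - β) / 2) := by
        rw [show (3:ℝ) - β = 1 + (2 - β) by ring, Real.rpow_add hU0, Real.rpow_one]
        ring
    _ ≤ ((Finset.Icc (M + 1) N).card : ℝ) * (U ^ (2 - β) / 2) :=
        mul_le_mul_of_nonneg_right hcard (by positivity)
    _ ≤ ∑ l ∈ Finset.Icc (M + 1) N, (l : ℝ) ^ (2 - β) := by
        have := Finset.card_nsmul_le_sum (Finset.Icc (M + 1) N)
          (fun l => (l : ℝ) ^ (2 - β)) (U ^ (2 - β) / 2) hterm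
        rwa [nsmul_eq_mul] at this
    _ ≤ ∑ l ∈ Finset.Icc 1 N, (l : ℝ) ^ (2 - β) :=
        Finset.sum_le_sum_of_subset_of_nonneg hsub (fun l _ _ => by positivity)


/-- Let `1 < β < 3`, `n` a positive integer, `1 ≤ d ≤ n`, and `u` a positive integer.
With `U = min{u, √(n/d)}` and `C_{β,u} = (∑_{i=1}^{u} i^{-β})⁻¹`, it holds that
`C_{β,u} · (d/n) · ∑_{λ=1}^{⌈U⌉} λ^{2-β} ≥ ((β-1)/(4β)) · d · U^{3-β} / n`. -/
theorem progress_probability_heavy_tailed (β : ℝ) (hβ1 : 1 < β) (hβ3 : β < 3)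
    (n d u : ℕ) (hn : 0 < n) (hd1 : 1 ≤ d) (hdn : d ≤ n) (hu : 0 < u) :
    (β - 1) / (4 * β) * d * (min (u : ℝ) (Real.sqrt ((n : ℝ) / d))) ^ (3 - β) / n ≤
      (∑ i ∈ Finset.Icc 1 u, (i : ℝ) ^ (-β))⁻¹ * ((d : ℝ) / n) *
        ∑ l ∈ Finset.Icc 1 ⌈min (u : ℝ) (Real.sqrt ((n : ℝ) / d))⌉₊, (l : ℝ) ^ (2 - β) := by
  set U : ℝ := min (u : ℝ) (Real.sqrt ((n : ℝ) / d)) with hUdef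
  have hβ0 : (0:ℝ) < β := by linarith
  have hd0 : (0:ℝ) < d := by exact_mod_cast hd1
  have hn0 : (0:ℝ) < n := by exact_mod_cast hn
  have hsqrt : (1:ℝ) ≤ Real.sqrt ((n : ℝ) / d) := by
    rw [show (1:ℝ) = Real.sqrt 1 from (Real.sqrt_one).symm]
    apply Real.sqrt_le_sqrt
    rw [le_div_iff₀ hd0]
    simpa using (by exact_mod_cast hdn : (d:ℝ) ≤ n)
  have hU1 : 1 ≤ U := le_min (by exact_mod_cast hu) hsqrt
  have hU0 : (0:ℝ) < U := by linarith
  have hSpos : 0 < ∑ i ∈ Finset.Icc 1 u, (i : ℝ) ^ (-β) := by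
    apply Finset.sum_pos
    · intro i hi
      rw [Finset.mem_Icc] at hi
      have : (0:ℝ) < i := by exact_mod_cast hi.1
      positivity
    · exact ⟨1, Finset.mem_Icc.mpr ⟨le_rfl, hu⟩⟩
  have hSle : ∑ i ∈ Finset.Icc 1 u, (i : ℝ) ^ (-β) ≤ β / (β - 1) :=
    sum_rpow_neg_le β hβ1 u hu
  have hCinv : (β - 1) / β ≤ (∑ i ∈ Finset.Icc 1 u, (i : ℝ) ^ (-β))⁻¹ := by
    rw [show (β - 1) / β = (β / (β - 1))⁻¹ by rw [inv_div]]
    exact inv_anti₀ hSpos hSle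
  have hT : U ^ (3 - β) / 4 ≤ ∑ l ∈ Finset.Icc 1 ⌈U⌉₊, (l : ℝ) ^ (2 - β) :=
    tail_sum_ge β hβ1 hβ3 U hU1
  have hUpow : (0:ℝ) ≤ U ^ (3 - β) := Real.rpow_nonneg (le_of_lt hU0) _
  calc (β - 1) / (4 * β) * d * U ^ (3 - β) / n
      = ((β - 1) / β) * ((d : ℝ) / n) * (U ^ (3 - β) / 4) := by
        field_simp
    _ ≤ (∑ i ∈ Finset.Icc 1 u, (i : ℝ) ^ (-β))⁻¹ * ((d : ℝ) / n) *
        ∑ l ∈ Finset.Icc 1 ⌈U⌉₊, (l : ℝ) ^ (2 - β) := by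
        have h1 : (0:ℝ) ≤ (d:ℝ)/n := by positivity
        exact mul_le_mul (mul_le_mul_of_nonneg_right hCinv h1) hT
          (div_nonneg hUpow (by norm_num))
          (mul_nonneg (inv_nonneg.2 hSpos.le) h1)
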